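/- arXiv:2203.13543 — 5 statements merged into one kernel-verified Lean document; each statement's English description precedes it below -/
import Mathlib

section
/- Let σ be a word of length n and r a natural number not occurring in σ. For every 1 ≤ i ≤ n: if des(σ^{(i)}(r)) = des(σ) + 1 then im(σ,i,r) = max{im(σ,0,r), …, im(σ,i−1,r)} + 1, and otherwise im(σ,i,r) = min{im(σ,0,r), …, im(σ,i−1,r)} − 1. -/
open Polynomial List

/-- The set of (1-indexed) descents of a word `w`: indices `i` with
`1 ≤ i ≤ length w - 1` and `w_i > w_{i+1}`. -/
def descents (w : List ℕ) : Finset ℕ :=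
  (Finset.Ico 1 w.length).filter (fun i => w.getD i 0 < w.getD (i - 1) 0)

/-- The number of descents of a word. -/
def des (w : List ℕ) : ℕ := (descents w).card

/-- The major index of a word: the sum of its descents. -/
def maj (w : List ℕ) : ℕ := ∑ i ∈ descents w, i

/-- `dge i w` is the number of descents of `w` that are `≥ i`. -/
def dge (i : ℕ) (w : List ℕ) : ℕ := ((descents w).filter (fun j => i ≤ j)).card

/-- `α` is a shuffle of the disjoint words `σ` and `π`. -/
def IsShuffle (σ π α : List ℕ) : Prop :=
  α.length = σ.length + π.length ∧ σ.Sublist α ∧ π.Sublist α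

/-- `ins σ i r` is `σ^{(i)}(r)`, the word obtained by inserting `r`
immediately before `σ_{i+1}` (after `σ_n` when `i = n`). -/
def ins (σ : List ℕ) (i r : ℕ) : List ℕ := σ.insertIdx i r

/-- The major increment `im(σ,i,r) = maj(σ^{(i)}(r)) - maj(σ)`. -/
def im (σ : List ℕ) (i r : ℕ) : ℤ := (maj (ins σ i r) : ℤ) - (maj σ : ℤ)

/-- The space `i` (for `0 ≤ i ≤ n`) is an RL-space of `σ` relative to `r`. -/
def IsRL (σ : List ℕ) (r i : ℕ) : Prop :=
  (i = σ.length ∧ ∀ x ∈ σ.getLast?, x < r) ∨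
  (i = 0 ∧ ∀ x ∈ σ.head?, r < x) ∨
  (0 < i ∧ i < σ.length ∧ r < σ.getD i 0 ∧ σ.getD i 0 < σ.getD (i - 1) 0) ∨
  (0 < i ∧ i < σ.length ∧ σ.getD i 0 < σ.getD (i - 1) 0 ∧ σ.getD (i - 1) 0 < r) ∨
  (0 < i ∧ i < σ.length ∧ σ.getD (i - 1) 0 < r ∧ r < σ.getD i 0)

/-- The Gaussian binomial coefficient `[N choose M]_q`, as a polynomial in `q`:
`∏_{j=1}^{M} (1 - q^{N-M+j}) / ∏_{j=1}^{M} (1 - q^{j})` when `0 ≤ M ≤ N`, and `0` otherwise. -/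
noncomputable def gauss (N M : ℤ) : Polynomial ℚ :=
  if 0 ≤ M ∧ M ≤ N then
    (∏ j ∈ Finset.Icc 1 M.toNat, (1 - (X : Polynomial ℚ) ^ (N - M + j).toNat)) /
      (∏ j ∈ Finset.Icc 1 M.toNat, (1 - (X : Polynomial ℚ) ^ (j : ℕ)))
  else 0

/-- `delPrefix α π i` is `α^{(i)}`: the word obtained from `α` by deleting
the letters `π₁, …, π_i`. -/
def delPrefix (α π : List ℕ) (i : ℕ) : List ℕ :=
  α.filter (fun x => !((π.take i).contains x))

-- auxiliary defs
def ch1 (σ : List ℕ) (r i : ℕ) : ℕ := if 1 ≤ i ∧ r < σ.getD (i-1) 0 then 1 else 0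
def ch2 (σ : List ℕ) (r i : ℕ) : ℕ := if i < σ.length ∧ σ.getD i 0 < r then 1 else 0
def chd (σ : List ℕ) (i : ℕ) : ℕ :=
  if 1 ≤ i ∧ i < σ.length ∧ σ.getD i 0 < σ.getD (i-1) 0 then 1 else 0
def nw (σ : List ℕ) (r i : ℕ) : ℕ := ch1 σ r i + ch2 σ r i - chd σ i

lemma imaux_getD_lt (σ : List ℕ) (r i j : ℕ) (hi : i ≤ σ.length) (hj : j < i) :
    (σ.insertIdx i r).getD j 0 = σ.getD j 0 := by
  have hj' : j < σ.length := lt_of_lt_of_le hj hi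
  rw [List.getD_eq_getElem _ _ (by rw [List.length_insertIdx_of_le_length hi]; omega),
    List.getD_eq_getElem _ _ hj']
  exact List.getElem_insertIdx_of_lt hj _

lemma imaux_getD_self (σ : List ℕ) (r i : ℕ) (hi : i ≤ σ.length) :
    (σ.insertIdx i r).getD i 0 = r := by
  rw [List.getD_eq_getElem _ _ (by rw [List.length_insertIdx_of_le_length hi]; omega)]
  exact List.getElem_insertIdx_self _

lemma imaux_getD_gt (σ : List ℕ) (r i d : ℕ) (hid : i ≤ d) (hd : d < σ.length) :
    (σ.insertIdx i r).getD (d+1) 0 = σ.getD d 0 := by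
  obtain ⟨k, rfl⟩ : ∃ k, d = i + k := ⟨d - i, by omega⟩
  have hi : i ≤ σ.length := by omega
  rw [List.getD_eq_getElem _ _ (by rw [List.length_insertIdx_of_le_length hi]; omega),
    List.getD_eq_getElem _ _ hd]
  rw [List.getElem_insertIdx_of_gt (by omega)]
  simp

lemma imaux_getD_mem (σ : List ℕ) (j : ℕ) (hj : j < σ.length) : σ.getD j 0 ∈ σ := by
  rw [List.getD_eq_getElem _ _ hj]
  exact List.getElem_mem hj

lemma imaux_des_sum (w : List ℕ) :
    des w = ∑ j ∈ Finset.Ico 1 w.length, (if w.getD j 0 < w.getD (j-1) 0 then 1 else 0) := by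
  rw [des, descents, Finset.card_filter]

lemma imaux_maj_sum (w : List ℕ) :
    maj w = ∑ j ∈ Finset.Ico 1 w.length, (if w.getD j 0 < w.getD (j-1) 0 then j else 0) := by
  rw [maj, descents, Finset.sum_filter]

lemma imaux_dge_sum (i : ℕ) (w : List ℕ) :
    dge i w = ∑ j ∈ Finset.Ico 1 w.length,
      (if (w.getD j 0 < w.getD (j-1) 0 ∧ i ≤ j) then 1 else 0) := by
  rw [dge, descents, Finset.filter_filter, Finset.card_filter]

lemma imaux_sum_ins (σ : List ℕ) (r i : ℕ) (hi : i ≤ σ.length) (v : ℕ → ℕ) :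
    (∑ j ∈ Finset.Ico 1 (σ.length + 1),
        if (σ.insertIdx i r).getD j 0 < (σ.insertIdx i r).getD (j-1) 0 then v j else 0)
      = (∑ d ∈ Finset.Ico 1 σ.length,
          if σ.getD d 0 < σ.getD (d-1) 0 then
            (if d < i then v d else if d = i then 0 else v (d+1)) else 0)
        + (if 1 ≤ i ∧ r < σ.getD (i-1) 0 then v i else 0)
        + (if i < σ.length ∧ σ.getD i 0 < r then v (i+1) else 0) := by
  set w := σ.insertIdx i r with hw
  have hP1 : (∑ j ∈ Finset.Ico 1 (i+1), if w.getD j 0 < w.getD (j-1) 0 then v j else 0)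
      = (∑ d ∈ Finset.Ico 1 i, if σ.getD d 0 < σ.getD (d-1) 0 then v d else 0)
        + (if 1 ≤ i ∧ r < σ.getD (i-1) 0 then v i else 0) := by
    rcases Nat.eq_zero_or_pos i with h0 | h0
    · subst h0; simp
    · rw [Finset.sum_Ico_succ_top h0]
      congr 1
      · refine Finset.sum_congr rfl fun j hj => ?_
        simp only [Finset.mem_Ico] at hj
        rw [hw, imaux_getD_lt σ r i j hi (by omega), imaux_getD_lt σ r i (j-1) hi (by omega)]
      · rw [hw, imaux_getD_self σ r i hi, imaux_getD_lt σ r i (i-1) hi (by omega)]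
        have he : (1 ≤ i ∧ r < σ.getD (i-1) 0) = (r < σ.getD (i-1) 0) := by
          rw [eq_iff_iff]; exact and_iff_right h0
        simp only [he]
  have hP2' : (∑ x ∈ Finset.Ico i σ.length,
        if w.getD (x+1) 0 < w.getD (x+1-1) 0 then v (x+1) else 0)
      = ∑ j ∈ Finset.Ico (i+1) (σ.length+1), if w.getD j 0 < w.getD (j-1) 0 then v j else 0 :=
    Finset.sum_Ico_add' (fun j => if w.getD j 0 < w.getD (j-1) 0 then v j else 0) i σ.length 1
  have hP2 : (∑ j ∈ Finset.Ico (i+1) (σ.length+1),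
        if w.getD j 0 < w.getD (j-1) 0 then v j else 0)
      = (∑ d ∈ Finset.Ico (i+1) σ.length, if σ.getD d 0 < σ.getD (d-1) 0 then v (d+1) else 0)
        + (if i < σ.length ∧ σ.getD i 0 < r then v (i+1) else 0) := by
    rw [← hP2']
    rcases Nat.lt_or_ge i σ.length with hlt | hge
    · rw [Finset.sum_eq_sum_Ico_succ_bot hlt]
      have hbot : (if w.getD (i+1) 0 < w.getD (i+1-1) 0 then v (i+1) else 0)
          = (if i < σ.length ∧ σ.getD i 0 < r then v (i+1) else 0) := by
        rw [hw, imaux_getD_gt σ r i i le_rfl hlt]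
        simp only [Nat.add_sub_cancel]
        rw [imaux_getD_self σ r i hi]
        have he : (i < σ.length ∧ σ.getD i 0 < r) = (σ.getD i 0 < r) := by
          rw [eq_iff_iff]; exact and_iff_right hlt
        simp only [he]
      rw [hbot, add_comm]
      congr 1
      refine Finset.sum_congr rfl fun d hd => ?_
      simp only [Finset.mem_Ico] at hd
      have h1 : w.getD (d+1) 0 = σ.getD d 0 := by
        rw [hw]; exact imaux_getD_gt σ r i d (by omega) (by omega)
      have h2 : w.getD (d+1-1) 0 = σ.getD (d-1) 0 := by
        have e : d + 1 - 1 = (d - 1) + 1 := by omega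
        rw [hw, e]; exact imaux_getD_gt σ r i (d-1) (by omega) (by omega)
      rw [h1, h2]
    · have hie : i = σ.length := le_antisymm hi hge
      subst hie
      simp
  have hP3 : (∑ d ∈ Finset.Ico 1 σ.length,
        if σ.getD d 0 < σ.getD (d-1) 0 then
          (if d < i then v d else if d = i then 0 else v (d+1)) else 0)
      = (∑ d ∈ Finset.Ico 1 i, if σ.getD d 0 < σ.getD (d-1) 0 then v d else 0)
        + (∑ d ∈ Finset.Ico (i+1) σ.length,
            if σ.getD d 0 < σ.getD (d-1) 0 then v (d+1) else 0) := by
    rcases Nat.eq_zero_or_pos i with h0 | h0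
    · subst h0
      rw [Finset.Ico_eq_empty (a := 1) (b := 0) (by omega), Finset.sum_empty, zero_add]
      refine Finset.sum_congr rfl fun d hd => ?_
      simp only [Finset.mem_Ico] at hd
      split_ifs <;> first | rfl | omega
    · rw [← Finset.sum_Ico_consecutive _ (show 1 ≤ i by omega) hi]
      congr 1
      · refine Finset.sum_congr rfl fun d hd => ?_
        simp only [Finset.mem_Ico] at hd
        split_ifs <;> first | rfl | omega
      · rcases Nat.lt_or_ge i σ.length with hlt | hge
        · rw [Finset.sum_eq_sum_Ico_succ_bot hlt]
          have hz : (if σ.getD i 0 < σ.getD (i-1) 0 then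
              (if i < i then v i else if i = i then 0 else v (i+1)) else 0) = 0 := by
            split_ifs <;> first | rfl | omega
          rw [hz, zero_add]
          refine Finset.sum_congr rfl fun d hd => ?_
          simp only [Finset.mem_Ico] at hd
          split_ifs <;> first | rfl | omega
        · have hie : i = σ.length := le_antisymm hi hge
          subst hie
          simp
  rw [← Finset.sum_Ico_consecutive _ (show 1 ≤ i + 1 by omega)
    (show i + 1 ≤ σ.length + 1 by omega), hP1, hP2, hP3]
  ring

lemma imaux_des_ins (σ : List ℕ) (r i : ℕ) (hi : i ≤ σ.length) :
    des (ins σ i r) + chd σ i = des σ + ch1 σ r i + ch2 σ r i := by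
  have hlen : (σ.insertIdx i r).length = σ.length + 1 := List.length_insertIdx_of_le_length hi r
  have hs := imaux_sum_ins σ r i hi (fun _ => 1)
  have hd2 : chd σ i = ∑ d ∈ Finset.Ico 1 σ.length,
      (if d = i then (if σ.getD d 0 < σ.getD (d-1) 0 then 1 else 0) else 0) := by
    rw [Finset.sum_ite_eq' (Finset.Ico 1 σ.length) i
      (fun d => if σ.getD d 0 < σ.getD (d-1) 0 then 1 else 0), chd]
    simp only [Finset.mem_Ico]
    split_ifs <;> omega
  have hdel : (∑ d ∈ Finset.Ico 1 σ.length,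
        (if σ.getD d 0 < σ.getD (d-1) 0 then (if d < i then 1 else if d = i then 0 else 1) else 0))
        + chd σ i
      = ∑ d ∈ Finset.Ico 1 σ.length, (if σ.getD d 0 < σ.getD (d-1) 0 then 1 else 0) := by
    rw [hd2, ← Finset.sum_add_distrib]
    exact Finset.sum_congr rfl fun d hd => by split_ifs <;> omega
  simp only [ins]
  rw [imaux_des_sum (σ.insertIdx i r), hlen, hs, imaux_des_sum σ]
  simp only [ch1, ch2] at *
  omega

lemma imaux_maj_ins (σ : List ℕ) (r i : ℕ) (hi : i ≤ σ.length) :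
    maj (ins σ i r) + i * chd σ i
      = maj σ + dge (i+1) σ + i * ch1 σ r i + (i+1) * ch2 σ r i := by
  have hlen : (σ.insertIdx i r).length = σ.length + 1 := List.length_insertIdx_of_le_length hi r
  have hs := imaux_sum_ins σ r i hi (fun j => j)
  have hd2 : i * chd σ i = ∑ d ∈ Finset.Ico 1 σ.length,
      (if d = i then (if σ.getD d 0 < σ.getD (d-1) 0 then d else 0) else 0) := by
    rw [Finset.sum_ite_eq' (Finset.Ico 1 σ.length) i
      (fun d => if σ.getD d 0 < σ.getD (d-1) 0 then d else 0), chd]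
    simp only [Finset.mem_Ico]
    split_ifs <;> omega
  have hdel : (∑ d ∈ Finset.Ico 1 σ.length,
        (if σ.getD d 0 < σ.getD (d-1) 0 then (if d < i then d else if d = i then 0 else d+1) else 0))
        + i * chd σ i
      = (∑ d ∈ Finset.Ico 1 σ.length, (if σ.getD d 0 < σ.getD (d-1) 0 then d else 0))
        + ∑ d ∈ Finset.Ico 1 σ.length,
            (if (σ.getD d 0 < σ.getD (d-1) 0 ∧ i + 1 ≤ d) then 1 else 0) := by
    rw [hd2, ← Finset.sum_add_distrib, ← Finset.sum_add_distrib]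
    refine Finset.sum_congr rfl fun d hd => ?_
    simp only [Finset.mem_Ico] at hd
    split_ifs <;> omega
  have e1 : i * ch1 σ r i = (if 1 ≤ i ∧ r < σ.getD (i-1) 0 then i else 0) := by
    rw [ch1]; split_ifs <;> omega
  have e2 : (i+1) * ch2 σ r i = (if i < σ.length ∧ σ.getD i 0 < r then i+1 else 0) := by
    rw [ch2]; split_ifs <;> omega
  rw [imaux_dge_sum]
  simp only [ins]
  rw [imaux_maj_sum (σ.insertIdx i r), hlen, hs, imaux_maj_sum σ, e1, e2]
  omega

lemma imaux_dge_succ (σ : List ℕ) (i : ℕ) :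
    dge i σ = dge (i+1) σ + chd σ i := by
  simp only [imaux_dge_sum, chd]
  have hd2 : (if 1 ≤ i ∧ i < σ.length ∧ σ.getD i 0 < σ.getD (i-1) 0 then 1 else 0)
      = ∑ d ∈ Finset.Ico 1 σ.length,
          (if d = i then (if σ.getD d 0 < σ.getD (d-1) 0 ∧ i ≤ d then 1 else 0) else 0) := by
    rw [Finset.sum_ite_eq' (Finset.Ico 1 σ.length) i
      (fun d => if σ.getD d 0 < σ.getD (d-1) 0 ∧ i ≤ d then 1 else 0)]
    simp only [Finset.mem_Ico]
    split_ifs <;> omega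
  rw [hd2, ← Finset.sum_add_distrib]
  refine Finset.sum_congr rfl fun d hd => ?_
  simp only [Finset.mem_Ico] at hd
  split_ifs <;> omega

lemma imaux_ch_bounds (σ : List ℕ) (r i : ℕ) (hi : i ≤ σ.length) (hr : r ∉ σ) :
    chd σ i ≤ ch1 σ r i + ch2 σ r i ∧ ch1 σ r i + ch2 σ r i ≤ chd σ i + 1 := by
  have hne : ∀ j, j < σ.length → σ.getD j 0 ≠ r := fun j hj h => hr (h ▸ imaux_getD_mem σ j hj)
  simp only [ch1, ch2, chd]
  rcases Nat.lt_or_ge i σ.length with hlt | hge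
  · rcases Nat.eq_zero_or_pos i with h0 | h0
    · subst h0; split_ifs <;> omega
    · have hb := hne (i-1) (by omega)
      have ha := hne i (by omega)
      split_ifs <;> omega
  · split_ifs <;> omega

lemma imaux_des_ins_eq (σ : List ℕ) (r i : ℕ) (hi : i ≤ σ.length) (hr : r ∉ σ) :
    des (ins σ i r) = des σ + nw σ r i ∧ nw σ r i ≤ 1 := by
  have h := imaux_des_ins σ r i hi
  have hb := imaux_ch_bounds σ r i hi hr
  unfold nw
  omega

lemma imaux_im_formula (σ : List ℕ) (r i : ℕ) (hi : i ≤ σ.length) :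
    im σ i r = (dge (i+1) σ : ℤ) + (i : ℤ) * (ch1 σ r i : ℤ) + ((i : ℤ) + 1) * (ch2 σ r i : ℤ)
      - (i : ℤ) * (chd σ i : ℤ) := by
  have h := imaux_maj_ins σ r i hi
  rw [im]
  have h' : (maj (ins σ i r) : ℤ) + (i:ℤ) * (chd σ i : ℤ)
      = (maj σ : ℤ) + (dge (i+1) σ : ℤ) + (i:ℤ) * (ch1 σ r i:ℤ)
        + ((i:ℤ)+1) * (ch2 σ r i:ℤ) := by exact_mod_cast h
  linarith

lemma imaux_rec (σ : List ℕ) (r i : ℕ) (h1 : 1 ≤ i) (hi : i ≤ σ.length) (hr : r ∉ σ) :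
    im σ i r - im σ (i-1) r
      = (i : ℤ) * (((ch1 σ r i : ℤ) + (ch2 σ r i : ℤ) - (chd σ i : ℤ))
            - ((ch1 σ r (i-1) : ℤ) + (ch2 σ r (i-1) : ℤ) - (chd σ (i-1) : ℤ)))
        + ((ch1 σ r i : ℤ) + (ch2 σ r i : ℤ) - (chd σ i : ℤ))
        + ((ch1 σ r (i-1) : ℤ) + (ch2 σ r (i-1) : ℤ) - (chd σ (i-1) : ℤ)) - 1 := by
  have hne : σ.getD (i-1) 0 ≠ r := fun h => hr (h ▸ imaux_getD_mem σ (i-1) (by omega))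
  have hsum : ch2 σ r (i-1) + ch1 σ r i = 1 := by
    simp only [ch1, ch2]
    split_ifs <;> omega
  have hsumZ : (ch2 σ r (i-1) : ℤ) + (ch1 σ r i : ℤ) = 1 := by exact_mod_cast hsum
  have hdge := imaux_dge_succ σ i
  have hf1 := imaux_im_formula σ r i hi
  have hf0 := imaux_im_formula σ r (i-1) (by omega)
  rw [show i - 1 + 1 = i from by omega, hdge] at hf0
  push_cast at hf0
  have hic : ((i - 1 : ℕ) : ℤ) = (i : ℤ) - 1 := by omega
  rw [hic] at hf0
  rw [hf1, hf0]
  linear_combination -hsumZ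

set_option maxHeartbeats 1000000 in
/-- Each new major increment is either one more than the maximum, or one less than the
minimum, of the preceding major increments, according to whether the insertion creates
a new descent or not. -/
theorem im_max_or_min (n : ℕ) (σ : List ℕ) (hσl : σ.length = n) (hσnd : σ.Nodup)
    (r : ℕ) (hr : r ∉ σ) (i : ℕ) (hi1 : 1 ≤ i) (hin : i ≤ n) :
    (des (ins σ i r) = des σ + 1 →
      im σ i r =
        (Finset.range i).sup' (Finset.nonempty_range_iff.mpr (by omega))
          (fun j => im σ j r) + 1) ∧
    (des (ins σ i r) ≠ des σ + 1 →
      im σ i r =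
        (Finset.range i).inf' (Finset.nonempty_range_iff.mpr (by omega))
          (fun j => im σ j r) - 1) := by
  subst hσl
  classical
  set N : ℕ → ℕ := fun k =>
    ((Finset.Icc 1 k).filter (fun j => des (ins σ j r) = des σ + 1)).card with hN
  have hNs : ∀ k, N (k+1) = N k + (if des (ins σ (k+1) r) = des σ + 1 then 1 else 0) := by
    intro k
    simp only [hN, Finset.card_filter]
    rw [Finset.sum_Icc_succ_top (by omega : 1 ≤ k + 1)]
  have hNle : ∀ k, N k ≤ k := by
    intro k
    simp only [hN]
    calc ((Finset.Icc 1 k).filter _).card ≤ (Finset.Icc 1 k).card := Finset.card_filter_le _ _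
      _ = k := by rw [Nat.card_Icc]; omega
  have key : ∀ k, k ≤ σ.length →
      ((des (ins σ k r) = des σ + 1 → im σ k r = im σ 0 r + (N k : ℤ)) ∧
      (des (ins σ k r) ≠ des σ + 1 → im σ k r = im σ 0 r - ((k : ℤ) - (N k : ℤ))) ∧
      (Finset.range (k+1)).sup' (Finset.nonempty_range_iff.mpr (Nat.succ_ne_zero k))
          (fun j => im σ j r) = im σ 0 r + (N k : ℤ) ∧
      (Finset.range (k+1)).inf' (Finset.nonempty_range_iff.mpr (Nat.succ_ne_zero k))
          (fun j => im σ j r) = im σ 0 r - ((k : ℤ) - (N k : ℤ))) := by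
    intro k
    induction k with
    | zero =>
      intro _
      have hN0 : N 0 = 0 := by simp [hN]
      refine ⟨fun _ => by rw [hN0]; push_cast; ring,
        fun _ => by rw [hN0]; push_cast; ring, ?_, ?_⟩
      · have h1 : ((Finset.range (0+1)).sup'
            (Finset.nonempty_range_iff.mpr (Nat.succ_ne_zero 0)) fun j => im σ j r)
            = im σ 0 r := by
          apply _root_.le_antisymm
          · refine Finset.sup'_le _ _ fun j hj => ?_
            rw [Finset.mem_range] at hj
            have hj0 : j = 0 := by omega
            subst hj0
            exact le_rfl
          · exact Finset.le_sup' (fun j => im σ j r) (Finset.mem_range.mpr (by omega))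
        rw [h1, hN0]
        push_cast; ring
      · have h1 : ((Finset.range (0+1)).inf'
            (Finset.nonempty_range_iff.mpr (Nat.succ_ne_zero 0)) fun j => im σ j r)
            = im σ 0 r := by
          apply _root_.le_antisymm
          · exact Finset.inf'_le (fun j => im σ j r) (Finset.mem_range.mpr (by omega))
          · refine Finset.le_inf' _ _ fun j hj => ?_
            rw [Finset.mem_range] at hj
            have hj0 : j = 0 := by omega
            subst hj0
            exact le_rfl
        rw [h1, hN0]
        push_cast; ring
    | succ k ih =>
      intro hk1
      have hk : k ≤ σ.length := by omega
      obtain ⟨ihA, ihB, ihS, ihI⟩ := ih hk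
      have hrec := imaux_rec σ r (k+1) (by omega) hk1 hr
      simp only [Nat.add_sub_cancel] at hrec
      have hd1 := imaux_des_ins_eq σ r (k+1) hk1 hr
      have hd0 := imaux_des_ins_eq σ r k hk hr
      have hb1 := imaux_ch_bounds σ r (k+1) hk1 hr
      have hb0 := imaux_ch_bounds σ r k hk hr
      have hz1 : (ch1 σ r (k+1) : ℤ) + (ch2 σ r (k+1) : ℤ) - (chd σ (k+1) : ℤ)
          = (nw σ r (k+1) : ℤ) := by simp only [nw]; omega
      have hz0 : (ch1 σ r k : ℤ) + (ch2 σ r k : ℤ) - (chd σ k : ℤ) = (nw σ r k : ℤ) := by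
        simp only [nw]; omega
      rw [hz1, hz0] at hrec
      have hNcase : N (k+1) = N k ∨ N (k+1) = N k + 1 := by
        rw [hNs k]; split_ifs <;> omega
      have hA' : des (ins σ (k+1) r) = des σ + 1 →
          im σ (k+1) r = im σ 0 r + (N (k+1) : ℤ) := by
        intro hnew
        have hv1 : nw σ r (k+1) = 1 := by omega
        have hNk := hNs k
        rw [if_pos hnew] at hNk
        by_cases hc : des (ins σ k r) = des σ + 1
        · have hv0 : nw σ r k = 1 := by omega
          have hval := ihA hc
          rw [hv1, hv0] at hrec
          push_cast at hrec
          omega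
        · have hv0 : nw σ r k = 0 := by omega
          have hval := ihB hc
          rw [hv1, hv0] at hrec
          push_cast at hrec
          omega
      have hB' : des (ins σ (k+1) r) ≠ des σ + 1 →
          im σ (k+1) r = im σ 0 r - (((k+1) : ℤ) - (N (k+1) : ℤ)) := by
        intro hold
        have hv1 : nw σ r (k+1) = 0 := by omega
        have hNk := hNs k
        rw [if_neg hold] at hNk
        by_cases hc : des (ins σ k r) = des σ + 1
        · have hv0 : nw σ r k = 1 := by omega
          have hval := ihA hc
          rw [hv1, hv0] at hrec
          push_cast at hrec
          omega
        · have hv0 : nw σ r k = 0 := by omega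
          have hval := ihB hc
          rw [hv1, hv0] at hrec
          push_cast at hrec
          omega
      have hNk1 : N (k+1) ≤ k + 1 := hNle (k+1)
      have hS' : (Finset.range (k+1+1)).sup'
          (Finset.nonempty_range_iff.mpr (Nat.succ_ne_zero (k+1)))
          (fun j => im σ j r) = im σ 0 r + (N (k+1) : ℤ) := by
        apply _root_.le_antisymm
        · refine Finset.sup'_le _ _ fun j hj => ?_
          rw [Finset.mem_range] at hj
          rcases Nat.lt_or_ge j (k+1) with hjk | hjk
          · have h1 : im σ j r ≤ (Finset.range (k+1)).sup'
                (Finset.nonempty_range_iff.mpr (Nat.succ_ne_zero k)) (fun j => im σ j r) :=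
              Finset.le_sup' (fun j => im σ j r) (Finset.mem_range.mpr hjk)
            rw [ihS] at h1
            rcases hNcase with h | h <;> omega
          · have hj1 : j = k + 1 := by omega
            subst hj1
            by_cases hc : des (ins σ (k+1) r) = des σ + 1
            · have := hA' hc; omega
            · have := hB' hc; omega
        · by_cases hc : des (ins σ (k+1) r) = des σ + 1
          · have h1 := hA' hc
            have h2 : im σ (k+1) r ≤ (Finset.range (k+1+1)).sup'
                (Finset.nonempty_range_iff.mpr (Nat.succ_ne_zero (k+1))) (fun j => im σ j r) :=
              Finset.le_sup' (fun j => im σ j r) (Finset.mem_range.mpr (by omega))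
            omega
          · obtain ⟨b, hb, hbe⟩ := Finset.exists_mem_eq_sup'
              (Finset.nonempty_range_iff.mpr (Nat.succ_ne_zero k)) (fun j => im σ j r)
            have h2 : im σ b r ≤ (Finset.range (k+1+1)).sup'
                (Finset.nonempty_range_iff.mpr (Nat.succ_ne_zero (k+1))) (fun j => im σ j r) :=
              Finset.le_sup' (fun j => im σ j r) (by rw [Finset.mem_range] at hb ⊢; omega)
            have h3 : N (k+1) = N k := by rw [hNs k, if_neg hc]; omega
            have h4 : im σ b r = im σ 0 r + (N k : ℤ) := by rw [← hbe, ihS]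
            omega
      have hI' : (Finset.range (k+1+1)).inf'
          (Finset.nonempty_range_iff.mpr (Nat.succ_ne_zero (k+1)))
          (fun j => im σ j r) = im σ 0 r - (((k+1) : ℤ) - (N (k+1) : ℤ)) := by
        apply _root_.le_antisymm
        · by_cases hc : des (ins σ (k+1) r) = des σ + 1
          · obtain ⟨b, hb, hbe⟩ := Finset.exists_mem_eq_inf'
              (Finset.nonempty_range_iff.mpr (Nat.succ_ne_zero k)) (fun j => im σ j r)
            have h2 : (Finset.range (k+1+1)).inf'
                (Finset.nonempty_range_iff.mpr (Nat.succ_ne_zero (k+1))) (fun j => im σ j r)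
                ≤ im σ b r :=
              Finset.inf'_le (fun j => im σ j r) (by rw [Finset.mem_range] at hb ⊢; omega)
            have h3 : N (k+1) = N k + 1 := by rw [hNs k, if_pos hc]
            have h4 : im σ b r = im σ 0 r - ((k : ℤ) - (N k : ℤ)) := by rw [← hbe, ihI]
            have h5 : N k ≤ k := hNle k
            push_cast at h2 h4 ⊢
            omega
          · have h1 := hB' hc
            have h2 : (Finset.range (k+1+1)).inf'
                (Finset.nonempty_range_iff.mpr (Nat.succ_ne_zero (k+1))) (fun j => im σ j r)
                ≤ im σ (k+1) r :=
              Finset.inf'_le (fun j => im σ j r) (Finset.mem_range.mpr (by omega))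
            omega
        · refine Finset.le_inf' _ _ fun j hj => ?_
          rw [Finset.mem_range] at hj
          rcases Nat.lt_or_ge j (k+1) with hjk | hjk
          · have h1 : (Finset.range (k+1)).inf'
                (Finset.nonempty_range_iff.mpr (Nat.succ_ne_zero k)) (fun j => im σ j r)
                ≤ im σ j r :=
              Finset.inf'_le (fun j => im σ j r) (Finset.mem_range.mpr hjk)
            rw [ihI] at h1
            have h5 : N k ≤ k := hNle k
            rcases hNcase with h | h <;> omega
          · have hj1 : j = k + 1 := by omega
            subst hj1
            by_cases hc : des (ins σ (k+1) r) = des σ + 1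
            · have := hA' hc
              have h5 : N k ≤ k := hNle k
              rcases hNcase with h | h <;> omega
            · have := hB' hc; omega
      exact ⟨hA', hB', hS', hI'⟩
  obtain ⟨m, rfl⟩ : ∃ m, i = m + 1 := ⟨i - 1, by omega⟩
  obtain ⟨kA, kB, -, -⟩ := key (m+1) hin
  obtain ⟨-, -, kS, kI⟩ := key m (by omega)
  have hNstep := hNs m
  have h5 := hNle m
  constructor
  · intro hnew
    rw [if_pos hnew] at hNstep
    rw [kA hnew, kS]
    omega
  · intro hold
    rw [if_neg hold] at hNstep
    rw [kB hold, kI]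
    omega
end

section
/- Let σ be a word of length m and let p, q be two distinct natural numbers not occurring in σ. Then for every 1 ≤ i ≤ m, the set {im(σ^{(i−1)}(p), j, q) : 0 ≤ j < i} equals the set {im(σ, j, p) + χ(q > p) : 0 ≤ j < i}, where χ(q > p) = 1 if q > p and 0 otherwise; that is, MIS_i(σ^{(i−1)}(p), q) is a permutation of {im(σ,j,p) + χ(q>p) : 0 ≤ j < i}. -/
open Polynomial List

/-! ### Auxiliary development for `mis_of_insertion` -/

section NovickAux

/-- `maj` as a sum of indicator terms over `Ico 1 (length w)`, valued in `ℤ`. -/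
lemma majZ_eq (w : List ℕ) :
    (maj w : ℤ) = ∑ k ∈ Finset.Ico 1 w.length,
      (if w.getD k 0 < w.getD (k-1) 0 then (k : ℤ) else 0) := by
  unfold maj descents
  rw [Nat.cast_sum, Finset.sum_filter]

/-- `dge` as a sum of indicator terms over `Ico i (length w)`, valued in `ℤ`. -/
lemma dgeZ_eq (w : List ℕ) (i : ℕ) (hi : 1 ≤ i) :
    (dge i w : ℤ) = ∑ k ∈ Finset.Ico i w.length,
      (if w.getD k 0 < w.getD (k-1) 0 then (1 : ℤ) else 0) := by
  unfold dge descents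
  rw [Finset.filter_filter]
  have h : (Finset.Ico 1 w.length).filter
        (fun j => (w.getD j 0 < w.getD (j-1) 0) ∧ i ≤ j)
      = (Finset.Ico i w.length).filter (fun j => w.getD j 0 < w.getD (j-1) 0) := by
    ext j
    simp only [Finset.mem_filter, Finset.mem_Ico]
    constructor
    · rintro ⟨⟨_, h2⟩, h3, h4⟩; exact ⟨⟨h4, h2⟩, h3⟩
    · rintro ⟨⟨h1, h2⟩, h3⟩; exact ⟨⟨le_trans hi h1, h2⟩, h3, h1⟩
  rw [h, Finset.card_filter, Nat.cast_sum]
  exact Finset.sum_congr rfl (by intros; split <;> simp)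

lemma getD_insertIdx_lt' (σ : List ℕ) (i r k : ℕ) (hk : k < i) (hkl : k < σ.length) :
    (σ.insertIdx i r).getD k 0 = σ.getD k 0 := by
  have h1 : k < (σ.insertIdx i r).length :=
    hkl.trans_le List.length_le_length_insertIdx
  rw [List.getD_eq_getElem _ _ h1, List.getD_eq_getElem _ _ hkl]
  exact List.getElem_insertIdx_of_lt hk h1

lemma getD_insertIdx_self' (σ : List ℕ) (i r : ℕ) (hi : i ≤ σ.length) :
    (σ.insertIdx i r).getD i 0 = r := by
  have h1 : i < (σ.insertIdx i r).length := by
    rw [List.length_insertIdx_of_le_length hi]; omega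
  rw [List.getD_eq_getElem _ _ h1]
  exact List.getElem_insertIdx_self h1

lemma getD_insertIdx_gt' (σ : List ℕ) (i r k : ℕ) (hk : i < k) (hkl : k ≤ σ.length) :
    (σ.insertIdx i r).getD k 0 = σ.getD (k-1) 0 := by
  have hi : i ≤ σ.length := by omega
  have h2 : k - 1 < σ.length := by omega
  have h1 : k < (σ.insertIdx i r).length := by
    rw [List.length_insertIdx_of_le_length hi]; omega
  rw [List.getD_eq_getElem _ _ h1, List.getD_eq_getElem _ _ h2]
  exact List.getElem_insertIdx_of_gt hk h1

lemma getD_mem' (w : List ℕ) (k : ℕ) (hk : k < w.length) : w.getD k 0 ∈ w := by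
  rw [List.getD_eq_getElem _ _ hk]; exact List.getElem_mem _

lemma getD_ne_getD (w : List ℕ) (hw : w.Nodup) {k j : ℕ} (hk : k < w.length)
    (hj : j < w.length) (h : k ≠ j) : w.getD k 0 ≠ w.getD j 0 := by
  rw [List.getD_eq_getElem _ _ hk, List.getD_eq_getElem _ _ hj]
  intro he
  have h2 := List.nodup_iff_injective_getElem.mp hw
    (show (fun i : Fin w.length => w[i.1]) ⟨k, hk⟩ = (fun i : Fin w.length => w[i.1]) ⟨j, hj⟩
      from he)
  exact h (by simpa using congrArg Fin.val h2)

lemma perm_insertIdx' (r : ℕ) : ∀ (i : ℕ) (l : List ℕ), i ≤ l.length →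
    (l.insertIdx i r).Perm (r :: l) := by
  intro i
  induction i with
  | zero => intro l _; rw [List.insertIdx_zero]
  | succ i ih =>
    intro l hl
    cases l with
    | nil => simp at hl
    | cons a l' =>
      rw [List.insertIdx_succ_cons]
      exact (((ih l') (by simpa using hl)).cons a).trans (List.Perm.swap r a l')

/-- The shifted part of the `maj` sum of an inserted word. -/
lemma sum_shift (σ : List ℕ) (i r : ℕ) (hi : i ≤ σ.length) :
    ∑ k ∈ Finset.Ico (i+2) (σ.length + 1),
        (if (σ.insertIdx i r).getD k 0 < (σ.insertIdx i r).getD (k-1) 0 then (k : ℤ) else 0)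
      = ∑ k ∈ Finset.Ico (i+1) σ.length,
          ((if σ.getD k 0 < σ.getD (k-1) 0 then (k : ℤ) else 0)
            + (if σ.getD k 0 < σ.getD (k-1) 0 then (1 : ℤ) else 0)) := by
  rw [Finset.sum_Ico_eq_sum_range, Finset.sum_Ico_eq_sum_range]
  have hn : σ.length + 1 - (i + 2) = σ.length - (i + 1) := by omega
  rw [hn]
  apply Finset.sum_congr rfl
  intro j hj
  simp only [Finset.mem_range] at hj
  rw [getD_insertIdx_gt' σ i r (i + 2 + j) (by omega) (by omega)]
  have e0 : i + 2 + j - 1 = i + 1 + j := by omega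
  rw [e0, getD_insertIdx_gt' σ i r (i + 1 + j) (by omega) (by omega)]
  split_ifs <;> push_cast <;> ring

/-- The `im` formula at space `0`. -/
lemma im_zero (σ : List ℕ) (r : ℕ) (hσ : 1 ≤ σ.length) :
    im σ 0 r = (dge 1 σ : ℤ) + (if σ.getD 0 0 < r then 1 else 0) := by
  have hlen : (σ.insertIdx 0 r).length = σ.length + 1 := List.length_insertIdx_of_le_length (by omega) _
  unfold im ins
  rw [majZ_eq, majZ_eq, hlen]
  rw [← Finset.sum_Ico_consecutive _ (show (1:ℕ) ≤ 2 by omega)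
    (show 2 ≤ σ.length + 1 by omega)]
  have h1 : ∑ k ∈ Finset.Ico 1 2,
      (if (σ.insertIdx 0 r).getD k 0 < (σ.insertIdx 0 r).getD (k-1) 0 then (k : ℤ) else 0)
      = (if σ.getD 0 0 < r then 1 else 0) := by
    rw [show Finset.Ico 1 2 = {1} from rfl, Finset.sum_singleton]
    rw [show (1:ℕ) - 1 = 0 from rfl,
      getD_insertIdx_gt' σ 0 r 1 (by omega) (by omega),
      getD_insertIdx_self' σ 0 r (by omega)]
    norm_num
  have h2 := sum_shift σ 0 r (by omega)
  rw [show (0:ℕ) + 2 = 2 from rfl, show (0:ℕ) + 1 = 1 from rfl] at h2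
  rw [h1, h2, Finset.sum_add_distrib, ← dgeZ_eq σ 1 (by omega)]
  ring

/-- The `im` formula at interior spaces `1 ≤ i < n`. -/
lemma im_mid (σ : List ℕ) (r i : ℕ) (hi : 1 ≤ i) (hin : i < σ.length) :
    im σ i r = (dge (i+1) σ : ℤ)
      + (if r < σ.getD (i-1) 0 then (i : ℤ) else 0)
      + (if σ.getD i 0 < r then (i : ℤ) + 1 else 0)
      - (if σ.getD i 0 < σ.getD (i-1) 0 then (i : ℤ) else 0) := by
  have hilen : i ≤ σ.length := by omega
  have hlen : (σ.insertIdx i r).length = σ.length + 1 := List.length_insertIdx_of_le_length hilen _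
  unfold im ins
  rw [majZ_eq, majZ_eq, hlen]
  -- split the inserted word's sum
  rw [← Finset.sum_Ico_consecutive _ (show 1 ≤ i by omega)
      (show i ≤ σ.length + 1 by omega),
    ← Finset.sum_Ico_consecutive (m := i) _ (show i ≤ i + 2 by omega)
      (show i + 2 ≤ σ.length + 1 by omega)]
  -- split the original word's sum
  rw [← Finset.sum_Ico_consecutive (f := fun k => if σ.getD k 0 < σ.getD (k-1) 0
        then (k : ℤ) else 0) (show 1 ≤ i by omega) (show i ≤ σ.length by omega),
    ← Finset.sum_Ico_consecutive (f := fun k => if σ.getD k 0 < σ.getD (k-1) 0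
        then (k : ℤ) else 0) (m := i) (show i ≤ i + 1 by omega)
      (show i + 1 ≤ σ.length by omega)]
  have hP1 : ∑ k ∈ Finset.Ico 1 i,
      (if (σ.insertIdx i r).getD k 0 < (σ.insertIdx i r).getD (k-1) 0 then (k : ℤ) else 0)
      = ∑ k ∈ Finset.Ico 1 i, (if σ.getD k 0 < σ.getD (k-1) 0 then (k : ℤ) else 0) := by
    apply Finset.sum_congr rfl
    intro k hk
    simp only [Finset.mem_Ico] at hk
    rw [getD_insertIdx_lt' σ i r k (by omega) (by omega),
      getD_insertIdx_lt' σ i r (k-1) (by omega) (by omega)]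
  have hP2 : ∑ k ∈ Finset.Ico i (i+2),
      (if (σ.insertIdx i r).getD k 0 < (σ.insertIdx i r).getD (k-1) 0 then (k : ℤ) else 0)
      = (if r < σ.getD (i-1) 0 then (i : ℤ) else 0)
        + (if σ.getD i 0 < r then (i : ℤ) + 1 else 0) := by
    have hset : Finset.Ico i (i+2) = {i, i+1} := by
      ext x; simp only [Finset.mem_Ico, Finset.mem_insert, Finset.mem_singleton]; omega
    rw [hset, Finset.sum_pair (by omega)]
    rw [getD_insertIdx_self' σ i r hilen,
      getD_insertIdx_lt' σ i r (i-1) (by omega) (by omega),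
      getD_insertIdx_gt' σ i r (i+1) (by omega) (by omega)]
    have e1 : i + 1 - 1 = i := by omega
    rw [e1, getD_insertIdx_self' σ i r hilen]
    push_cast
    ring_nf
  have hQ2 : ∑ k ∈ Finset.Ico i (i+1),
      (if σ.getD k 0 < σ.getD (k-1) 0 then (k : ℤ) else 0)
      = (if σ.getD i 0 < σ.getD (i-1) 0 then (i : ℤ) else 0) := by
    rw [show Finset.Ico i (i+1) = {i} from by
      ext x; simp only [Finset.mem_Ico, Finset.mem_singleton]; omega, Finset.sum_singleton]
  rw [hP1, hP2, sum_shift σ i r hilen, hQ2, Finset.sum_add_distrib,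
    ← dgeZ_eq σ (i+1) (by omega)]
  ring

/-- Indicator of the "RL pattern" for a triple of letters. -/
def rlI (a b r : ℕ) : ℤ :=
  if (r < b ∧ b < a) ∨ (b < a ∧ a < r) ∨ (a < r ∧ r < b) then 1 else 0

/-- Indicator that space `k` (for `1 ≤ k ≤ length w`) is an RL-space. -/
def spc (w : List ℕ) (r k : ℕ) : ℤ :=
  if k = w.length then (if w.getD (k-1) 0 < r then 1 else 0)
  else rlI (w.getD (k-1) 0) (w.getD k 0) r

/-- The number of RL-spaces of `w` (w.r.t. `r`) with index in `[i, length w]`. -/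
def CZ (w : List ℕ) (r i : ℕ) : ℤ := ∑ k ∈ Finset.Icc i w.length, spc w r k

lemma dge_step (w : List ℕ) (i : ℕ) (hi : 1 ≤ i) (hin : i < w.length) :
    (dge i w : ℤ) = (dge (i+1) w : ℤ)
      + (if w.getD i 0 < w.getD (i-1) 0 then 1 else 0) := by
  rw [dgeZ_eq w i hi, dgeZ_eq w (i+1) (by omega)]
  rw [show Finset.Ico i w.length = insert i (Finset.Ico (i+1) w.length) from by
    ext x; simp only [Finset.mem_Ico, Finset.mem_insert]; omega]
  rw [Finset.sum_insert (by simp only [Finset.mem_Ico]; omega)]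
  ring

lemma CZ_step (w : List ℕ) (r i : ℕ) (hi : 1 ≤ i) (hin : i < w.length) :
    CZ w r i = rlI (w.getD (i-1) 0) (w.getD i 0) r + CZ w r (i+1) := by
  unfold CZ
  rw [show Finset.Icc i w.length = insert i (Finset.Icc (i+1) w.length) from by
    ext x; simp only [Finset.mem_Icc, Finset.mem_insert]; omega]
  rw [Finset.sum_insert (by simp only [Finset.mem_Icc]; omega)]
  unfold spc
  rw [if_neg (by omega)]

/-- Closed form for the RL-space count. -/
lemma CZ_closed (w : List ℕ) (r : ℕ) (hw : w.Nodup) (hr : r ∉ w) :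
    ∀ (d i : ℕ), 1 ≤ i → i + d = w.length →
    CZ w r i = (dge i w : ℤ) + 1 - (if r < w.getD (i-1) 0 then 1 else 0) := by
  intro d
  induction d with
  | zero =>
    intro i hi hlen
    have hi' : i = w.length := by omega
    unfold CZ
    rw [hi', Finset.Icc_self, Finset.sum_singleton]
    unfold spc
    rw [if_pos rfl]
    have hne : w.getD (w.length - 1) 0 ≠ r :=
      fun h => hr (h ▸ getD_mem' w (w.length - 1) (by omega))
    have hdge : (dge w.length w : ℤ) = 0 := by
      rw [dgeZ_eq w w.length (by omega), Finset.Ico_self, Finset.sum_empty]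
    rw [hdge]
    split_ifs <;> omega
  | succ d ih =>
    intro i hi hlen
    have hin : i < w.length := by omega
    rw [CZ_step w r i hi hin, ih (i+1) (by omega) (by omega),
      dge_step w i hi hin]
    have e1 : i + 1 - 1 = i := by omega
    rw [e1]
    have hab : w.getD (i-1) 0 ≠ w.getD i 0 :=
      getD_ne_getD w hw (by omega) (by omega) (by omega)
    have har : w.getD (i-1) 0 ≠ r :=
      fun h => hr (h ▸ getD_mem' w (i-1) (by omega))
    have hbr : w.getD i 0 ≠ r :=
      fun h => hr (h ▸ getD_mem' w i (by omega))
    unfold rlI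
    split_ifs <;> omega

/-- The prefix of major increments forms an interval. -/
lemma prefix_interval (w : List ℕ) (r : ℕ) (hw : w.Nodup) (hr : r ∉ w) :
    ∀ (i : ℕ), 1 ≤ i → i ≤ w.length →
    (Finset.range i).image (fun j => im w j r)
      = Finset.Icc (CZ w r i) (CZ w r i + i - 1) := by
  intro i hi
  induction i, hi using Nat.le_induction with
  | base =>
    intro hle
    have h0 : im w 0 r = CZ w r 1 := by
      rw [im_zero w r hle, CZ_closed w r hw hr (w.length - 1) 1 le_rfl (by omega)]
      have hne : w.getD 0 0 ≠ r := fun h => hr (h ▸ getD_mem' w 0 (by omega))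
      rw [show (1:ℕ) - 1 = 0 from rfl]
      split_ifs <;> omega
    rw [Finset.range_one, Finset.image_singleton, h0]
    rw [show CZ w r 1 + (1:ℕ) - 1 = CZ w r 1 from by push_cast; ring, Finset.Icc_self]
  | succ i hi1 ih =>
    intro hle
    have hin : i < w.length := by omega
    rw [Finset.range_add_one, Finset.image_insert, ih (by omega)]
    have hab : w.getD (i-1) 0 ≠ w.getD i 0 :=
      getD_ne_getD w hw (by omega) (by omega) (by omega)
    have har : w.getD (i-1) 0 ≠ r :=
      fun h => hr (h ▸ getD_mem' w (i-1) (by omega))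
    have hbr : w.getD i 0 ≠ r :=
      fun h => hr (h ▸ getD_mem' w i (by omega))
    have him := im_mid w r i hi1 hin
    have hci := CZ_closed w r hw hr (w.length - i) i hi1 (by omega)
    have hci1 := CZ_closed w r hw hr (w.length - (i+1)) (i+1) (by omega) (by omega)
    have e1 : i + 1 - 1 = i := by omega
    rw [e1] at hci1
    have hds := dge_step w i hi1 hin
    have key : (im w i r = CZ w r i + i ∧ CZ w r (i+1) = CZ w r i)
        ∨ (im w i r = CZ w r i - 1 ∧ CZ w r (i+1) = CZ w r i - 1) := by
      rw [him, hci, hci1, hds]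
      split_ifs <;> omega
    rcases key with ⟨h1, h2⟩ | ⟨h1, h2⟩ <;> rw [h1, h2] <;>
      · ext x
        simp only [Finset.mem_insert, Finset.mem_Icc]
        push_cast
        omega

end NovickAux


/-- **Novick's proposition.** `MIS_i(σ^{(i-1)}(p), q)` is a permutation of the set
`{im(σ,j,p) + χ(q > p) : 0 ≤ j < i}`. -/
theorem mis_of_insertion (m : ℕ) (σ : List ℕ) (hσl : σ.length = m) (hσnd : σ.Nodup)
    (p q : ℕ) (hpq : p ≠ q) (hp : p ∉ σ) (hq : q ∉ σ)
    (i : ℕ) (hi1 : 1 ≤ i) (him : i ≤ m) :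
    (Finset.range i).image (fun j => im (ins σ (i - 1) p) j q) =
      (Finset.range i).image (fun j => im σ j p + if q > p then 1 else 0) := by
  subst hσl
  have hi1m : i - 1 ≤ σ.length := by omega
  have hτlen : (ins σ (i-1) p).length = σ.length + 1 := List.length_insertIdx_of_le_length hi1m _
  have hperm : (ins σ (i-1) p).Perm (p :: σ) := perm_insertIdx' p (i-1) σ hi1m
  have hτnd : (ins σ (i-1) p).Nodup := by
    rw [hperm.nodup_iff]
    exact List.nodup_cons.mpr ⟨hp, hσnd⟩
  have hqτ : q ∉ ins σ (i-1) p := by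
    intro hmem
    rcases List.mem_cons.mp (hperm.mem_iff.mp hmem) with h | h
    · exact hpq h.symm
    · exact hq h
  rw [prefix_interval (ins σ (i-1) p) q hτnd hqτ i hi1 (by omega)]
  rw [show (fun j => im σ j p + (if q > p then (1:ℤ) else 0))
      = ((· + (if q > p then (1:ℤ) else 0)) ∘ (fun j => im σ j p)) from rfl,
    ← Finset.image_image, prefix_interval σ p hσnd hp i hi1 him,
    Finset.image_add_right_Icc]
  have hgdp : (ins σ (i-1) p).getD (i-1) 0 = p := getD_insertIdx_self' σ (i-1) p hi1m
  have hap : σ.getD (i-1) 0 ≠ p := fun h => hp (h ▸ getD_mem' σ (i-1) (by omega))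
  have hdgeτ : (dge i (ins σ (i-1) p) : ℤ) = (dge i σ : ℤ)
      + (if σ.getD (i-1) 0 < p then 1 else 0) := by
    rw [dgeZ_eq _ i hi1, dgeZ_eq σ i hi1, hτlen]
    rw [show Finset.Ico i (σ.length + 1) = insert i (Finset.Ico (i+1) (σ.length+1)) from by
      ext x; simp only [Finset.mem_Ico, Finset.mem_insert]; omega]
    rw [Finset.sum_insert (by simp only [Finset.mem_Ico]; omega)]
    have ht1 : (ins σ (i-1) p).getD i 0 = σ.getD (i-1) 0 := by
      have := getD_insertIdx_gt' σ (i-1) p i (by omega) (by omega)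
      rw [show i - 1 = i - 1 from rfl] at this
      exact this
    rw [ht1, hgdp]
    have hshift : ∑ k ∈ Finset.Ico (i+1) (σ.length + 1),
        (if (ins σ (i-1) p).getD k 0 < (ins σ (i-1) p).getD (k-1) 0 then (1:ℤ) else 0)
        = ∑ k ∈ Finset.Ico i σ.length,
            (if σ.getD k 0 < σ.getD (k-1) 0 then (1:ℤ) else 0) := by
      rw [Finset.sum_Ico_eq_sum_range, Finset.sum_Ico_eq_sum_range]
      rw [show σ.length + 1 - (i+1) = σ.length - i from by omega]
      apply Finset.sum_congr rfl
      intro j hj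
      simp only [Finset.mem_range] at hj
      show (if (σ.insertIdx (i-1) p).getD (i+1+j) 0
          < (σ.insertIdx (i-1) p).getD (i+1+j-1) 0 then (1:ℤ) else 0) = _
      rw [getD_insertIdx_gt' σ (i-1) p (i+1+j) (by omega) (by omega)]
      rw [show i + 1 + j - 1 = i + j from by omega]
      rw [getD_insertIdx_gt' σ (i-1) p (i+j) (by omega) (by omega)]
    rw [hshift]
    ring
  have hNeed2 : CZ (ins σ (i-1) p) q i = CZ σ p i + (if q > p then (1:ℤ) else 0) := by
    have h1 := CZ_closed (ins σ (i-1) p) q hτnd hqτ (σ.length + 1 - i) i hi1 (by omega)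
    rw [hgdp] at h1
    have h2 := CZ_closed σ p hσnd hp (σ.length - i) i hi1 (by omega)
    rw [h1, h2, hdgeτ]
    have hpq' : p ≠ q := hpq
    split_ifs <;> omega
  rw [hNeed2]
  congr 1
  ring
end

section
/- Let σ be a word of length m, π = π₁⋯π_n a word disjoint from σ, and α a shuffle of σ and π. For 0 ≤ i ≤ n let α^{(i)} be the word obtained from α by deleting π₁, …, π_i, and for 1 ≤ i ≤ n set t(i) = maj(α^{(i−1)}) − maj(α^{(i)}) − d_i(π). Then 0 ≤ t(i) ≤ m for every 1 ≤ i ≤ n. -/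
open Polynomial List

lemma descents_short (w : List ℕ) (h : w.length ≤ 1) : descents w = ∅ := by
  unfold descents
  have : Finset.Ico 1 w.length = ∅ := by
    apply Finset.Ico_eq_empty; omega
  rw [this, Finset.filter_empty]

lemma descents_cons_cons (a b : ℕ) (l : List ℕ) :
    descents (a :: b :: l) = (if b < a then {1} else ∅) ∪ (descents (b :: l)).image (· + 1) := by
  ext i
  simp only [descents, Finset.mem_filter, Finset.mem_Ico, Finset.mem_union, Finset.mem_image]
  constructor
  · rintro ⟨⟨h1, h2⟩, h3⟩
    rcases Nat.lt_or_ge i 2 with hi | hi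
    · interval_cases i
      · left
        have h3' : b < a := h3
        simp [h3']
    · right
      obtain ⟨j, rfl⟩ : ∃ j, i = j + 1 := ⟨i - 1, by omega⟩
      refine ⟨j, ⟨⟨by omega, by simpa using h2⟩, ?_⟩, rfl⟩
      have e1 : (a :: b :: l).getD (j+1) 0 = (b :: l).getD j 0 := rfl
      have e2 : (a :: b :: l).getD (j+1-1) 0 = (b :: l).getD (j-1) 0 := by
        obtain ⟨k, rfl⟩ : ∃ k, j = k + 1 := ⟨j - 1, by omega⟩
        rfl
      rw [e1, e2] at h3; exact h3
  · rintro (h | ⟨j, ⟨⟨hj1, hj2⟩, hj3⟩, rfl⟩)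
    · split_ifs at h with hba
      · simp only [Finset.mem_singleton] at h
        subst h
        refine ⟨⟨le_refl _, by simp⟩, ?_⟩
        exact hba
      · simp at h
    · simp only [List.length_cons] at hj2 ⊢
      refine ⟨⟨by omega, by omega⟩, ?_⟩
      have e1 : (a :: b :: l).getD (j+1) 0 = (b :: l).getD j 0 := rfl
      have e2 : (a :: b :: l).getD (j+1-1) 0 = (b :: l).getD (j-1) 0 := by
        obtain ⟨k, rfl⟩ : ∃ k, j = k + 1 := ⟨j - 1, by omega⟩
        rfl
      rw [e1, e2]; exact hj3

lemma descents_pos {w : List ℕ} {i : ℕ} (h : i ∈ descents w) : 1 ≤ i ∧ i < w.length := by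
  simp only [descents, Finset.mem_filter, Finset.mem_Ico] at h
  exact ⟨h.1.1, h.1.2⟩

lemma des_cons_cons (a b : ℕ) (l : List ℕ) :
    des (a :: b :: l) = (if b < a then 1 else 0) + des (b :: l) := by
  unfold des
  rw [descents_cons_cons, Finset.card_union_of_disjoint, Finset.card_image_of_injective _
    (add_left_injective 1)]
  · split_ifs <;> simp
  · intro s hs1 hs2 x hx
    have h1 := hs1 hx
    have h2 := hs2 hx
    simp only [Finset.mem_image] at h2
    split_ifs at h1 with hba
    · simp only [Finset.mem_singleton] at h1
      obtain ⟨j, hj, hj2⟩ := h2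
      have := descents_pos hj
      omega
    · simp at h1

lemma maj_cons_cons (a b : ℕ) (l : List ℕ) :
    maj (a :: b :: l) = maj (b :: l) + des (a :: b :: l) := by
  unfold maj
  rw [descents_cons_cons, Finset.sum_union, Finset.sum_image (by intro x _ y _ h; simp only at h; omega)]
  · rw [des_cons_cons]
    have : ∑ j ∈ descents (b :: l), (j + 1) = (∑ j ∈ descents (b :: l), j) + des (b :: l) := by
      rw [Finset.sum_add_distrib]; simp [des]
    rw [this]
    split_ifs <;> simp <;> ring
  · intro s hs1 hs2 x hx
    have h1 := hs1 hx
    have h2 := hs2 hx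
    simp only [Finset.mem_image] at h2
    split_ifs at h1 with hba
    · simp only [Finset.mem_singleton] at h1
      obtain ⟨j, hj, hj2⟩ := h2
      have := descents_pos hj
      omega
    · simp at h1

def desR : List ℕ → ℕ
  | a :: b :: l => (if b < a then 1 else 0) + desR (b :: l)
  | _ => 0

def majR : List ℕ → ℕ
  | a :: b :: l => majR (b :: l) + desR (a :: b :: l)
  | _ => 0

lemma des_eq_desR : ∀ w, des w = desR w
  | [] => by simp [des, descents_short, desR]
  | [a] => by simp [des, descents_short, desR]
  | a :: b :: l => by
    rw [des_cons_cons, desR, des_eq_desR (b :: l)]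

lemma maj_eq_majR : ∀ w, maj w = majR w
  | [] => by simp [maj, descents_short, majR]
  | [a] => by simp [maj, descents_short, majR]
  | a :: b :: l => by
    rw [maj_cons_cons, maj_eq_majR (b :: l), des_eq_desR (a :: b :: l), majR]

lemma dge_one (u : List ℕ) : dge 1 u = des u := by
  unfold dge des
  congr 1
  apply Finset.filter_true_of_mem
  intro x hx
  exact (descents_pos hx).1

lemma dge_shift (k : ℕ) (a : ℕ) (l : List ℕ) : dge (k+2) (a :: l) = dge (k+1) l := by
  match l with
  | [] => simp [dge, descents_short]
  | b :: l' =>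
    unfold dge
    rw [descents_cons_cons, Finset.filter_union]
    have h1 : ((if b < a then ({1} : Finset ℕ) else ∅).filter (fun j => k+2 ≤ j)) = ∅ := by
      split_ifs
      · ext x; simp; omega
      · simp
    have h2 : ((descents (b :: l')).image (· + 1)).filter (fun j => k+2 ≤ j)
        = ((descents (b :: l')).filter (fun j => k+1 ≤ j)).image (· + 1) := by
      ext x
      simp only [Finset.mem_filter, Finset.mem_image]
      constructor
      · rintro ⟨⟨j, hj, rfl⟩, hk⟩
        exact ⟨j, ⟨hj, by omega⟩, rfl⟩
      · rintro ⟨j, ⟨hj, hk⟩, rfl⟩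
        exact ⟨⟨j, hj, rfl⟩, by omega⟩
    rw [h1, h2, Finset.empty_union, Finset.card_image_of_injective _ (add_left_injective 1)]

lemma dge_drop : ∀ (u : List ℕ) (k : ℕ), desR (u.drop k) = dge (k+1) u
  | u, 0 => by rw [List.drop_zero, dge_one, des_eq_desR]
  | [], k+1 => by simp [desR, dge, descents_short]
  | a :: l, k+1 => by
    rw [List.drop_succ_cons, dge_drop l k, dge_shift]

lemma desR_cons_cons (x b : ℕ) (l : List ℕ) :
    desR (x :: b :: l) = (if b < x then 1 else 0) + desR (b :: l) := rfl

lemma majR_cons (x : ℕ) (u : List ℕ) : majR (x :: u) = majR u + desR (x :: u) := by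
  cases u with
  | nil => rfl
  | cons b l => rfl

lemma des_ins : ∀ (j : ℕ) (τ : List ℕ) (r : ℕ), j ≤ τ.length →
    desR τ ≤ desR (τ.insertIdx j r) ∧ desR (τ.insertIdx j r) ≤ desR τ + 1
  | 0, τ, r, _ => by
    rw [List.insertIdx_zero]
    cases τ with
    | nil => simp [desR]
    | cons b l => rw [desR_cons_cons]; split_ifs <;> omega
  | j+1, [], r, h => by simp at h
  | j+1, x :: τ', r, h => by
    rw [List.insertIdx_succ_cons]
    cases j with
    | zero =>
      rw [List.insertIdx_zero]
      cases τ' with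
      | nil => simp [desR]; split_ifs <;> omega
      | cons b l =>
        rw [desR_cons_cons x r (b :: l), desR_cons_cons r b l, desR_cons_cons x b l]
        split_ifs <;> omega
    | succ j' =>
      cases τ' with
      | nil => simp at h
      | cons y τ'' =>
        have ih := des_ins (j'+1) (y :: τ'') r (by simp at h ⊢; omega)
        rw [List.insertIdx_succ_cons] at ih ⊢
        rw [desR_cons_cons x y (τ''.insertIdx j' r), desR_cons_cons x y τ'']
        split_ifs <;> omega

lemma maj_ins : ∀ (j : ℕ) (τ : List ℕ) (r : ℕ), j ≤ τ.length →
    majR τ + desR ((τ.insertIdx j r).drop j) ≤ majR (τ.insertIdx j r) ∧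
    majR (τ.insertIdx j r) ≤ majR τ + desR ((τ.insertIdx j r).drop j) + j
  | 0, τ, r, _ => by
    rw [List.insertIdx_zero, List.drop_zero, majR_cons]
    omega
  | j+1, [], r, h => by simp at h
  | j+1, x :: τ', r, h => by
    have hle : j ≤ τ'.length := by simp at h; omega
    have ih := maj_ins j τ' r hle
    have hdes := des_ins (j+1) (x :: τ') r h
    rw [List.insertIdx_succ_cons] at hdes ⊢
    rw [List.drop_succ_cons, majR_cons x (τ'.insertIdx j r), majR_cons x τ']
    omega

lemma desR_le_cons (b : ℕ) (u : List ℕ) : desR u ≤ desR (b :: u) := by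
  cases u with
  | nil => simp [desR]
  | cons c l => rw [desR_cons_cons]; omega

lemma desR_cons_le_succ (b : ℕ) (u : List ℕ) : desR (b :: u) ≤ desR u + 1 := by
  cases u with
  | nil => simp [desR]
  | cons c l => rw [desR_cons_cons]; split_ifs <;> omega

lemma desR_cons_le (a b : ℕ) (u : List ℕ) : desR (a :: u) ≤ desR (a :: b :: u) := by
  cases u with
  | nil => simp [desR_cons_cons, desR]
  | cons c l =>
    rw [desR_cons_cons a c l, desR_cons_cons a b (c :: l), desR_cons_cons b c l]
    split_ifs <;> omega

lemma desR_cons2_le (a b : ℕ) (u : List ℕ) : desR (a :: b :: u) ≤ desR (a :: u) + 1 := by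
  cases u with
  | nil => simp [desR_cons_cons, desR]; split_ifs <;> omega
  | cons c l =>
    rw [desR_cons_cons a c l, desR_cons_cons a b (c :: l), desR_cons_cons b c l]
    split_ifs <;> omega

lemma sub_des {v u : List ℕ} (h : v.Sublist u) :
    desR v ≤ desR u ∧ ∀ a, desR (a :: v) ≤ desR (a :: u) := by
  induction h with
  | slnil => exact ⟨le_refl _, fun a => le_refl _⟩
  | cons b h ih =>
    refine ⟨ih.1.trans (desR_le_cons b _), fun a => (ih.2 a).trans (desR_cons_le a b _)⟩
  | cons_cons b h ih =>
    refine ⟨ih.2 b, fun a => ?_⟩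
    rw [desR_cons_cons a b _, desR_cons_cons a b _]
    have := ih.2 b
    omega

lemma sub_cnt {v u : List ℕ} (h : v.Sublist u) :
    desR u + v.length ≤ desR v + u.length ∧
    ∀ a, desR (a :: u) + v.length ≤ desR (a :: v) + u.length := by
  induction h with
  | slnil => exact ⟨le_refl _, fun a => le_refl _⟩
  | @cons l₁ l₂ b h ih =>
    constructor
    · have h1 := desR_cons_le_succ b l₂
      have h2 := ih.1
      simp only [List.length_cons]
      omega
    · intro a
      have h1 := desR_cons2_le a b l₂
      have h2 := ih.2 a
      simp only [List.length_cons]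
      omega
  | cons_cons b h ih =>
    constructor
    · have := ih.2 b
      simp only [List.length_cons]
      omega
    · intro a
      rw [desR_cons_cons a b _, desR_cons_cons a b _]
      have := ih.2 b
      simp only [List.length_cons]
      omega

lemma insertIdx_len (s t : List ℕ) (r : ℕ) : (s ++ t).insertIdx s.length r = s ++ r :: t := by
  induction s with
  | nil => simp
  | cons a s ih => simpa [List.insertIdx_succ_cons] using ih


/-- The statistics `t(i)` all lie between `0` and `m`. -/
theorem t_bounds (m n : ℕ) (σ π α : List ℕ)
    (hσl : σ.length = m) (hπl : π.length = n) (hσnd : σ.Nodup) (hπnd : π.Nodup)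
    (hdisj : σ.Disjoint π) (hα : IsShuffle σ π α)
    (t : ℕ → ℤ)
    (ht : ∀ i, t i = (maj (delPrefix α π (i - 1)) : ℤ) - (maj (delPrefix α π i) : ℤ)
      - (dge i π : ℤ)) :
    ∀ i, 1 ≤ i → i ≤ n → 0 ≤ t i ∧ t i ≤ m := by
  obtain ⟨hlen, hσsub, hπsub⟩ := hα
  have hndsp : (σ ++ π).Nodup := List.Nodup.append hσnd hπnd hdisj
  have hsp : (σ ++ π).Subperm α := by
    rw [List.subperm_ext_iff]
    intro x hx
    rw [List.count_append]
    rcases List.mem_append.1 hx with h | h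
    · have h1 : List.count x σ = 1 := List.count_eq_one_of_mem hσnd h
      have h2 : List.count x π = 0 := List.count_eq_zero_of_not_mem (fun hc => hdisj h hc)
      have h3 := hσsub.count_le x
      omega
    · have h1 : List.count x π = 1 := List.count_eq_one_of_mem hπnd h
      have h2 : List.count x σ = 0 := List.count_eq_zero_of_not_mem (fun hc => hdisj hc h)
      have h3 := hπsub.count_le x
      omega
  have hperm : (σ ++ π).Perm α := hsp.perm_of_length_le (by simp [hlen, hσl, hπl])
  have hαnd : α.Nodup := hperm.nodup hndsp
  intro i hi1 hi2
  obtain ⟨k, rfl⟩ : ∃ k, i = k + 1 := ⟨i - 1, by omega⟩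
  have hkn : k < n := by omega
  have hkπ : k < π.length := by omega
  obtain ⟨r, rest, hdropπ⟩ : ∃ r rest, π.drop k = r :: rest := by
    rw [List.drop_eq_getElem_cons hkπ]; exact ⟨_, _, rfl⟩
  -- name the take-prefix to control rewriting
  have hπf : π.filter (fun x => !((π.take k).contains x)) = π.drop k := by
    obtain ⟨A, hA⟩ : ∃ A, π.take k = A := ⟨_, rfl⟩
    have htdnd : (π.take k ++ π.drop k).Nodup := by rw [List.take_append_drop]; exact hπnd
    have hdisj_td : (π.take k).Disjoint (π.drop k) := List.disjoint_of_nodup_append htdnd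
    rw [hA] at hdisj_td
    rw [hA]
    conv_lhs => rw [← List.take_append_drop k π, hA]
    rw [List.filter_append]
    have h1 : A.filter (fun x => !(A.contains x)) = [] := by
      rw [List.filter_eq_nil_iff]
      intro a ha
      simp [ha]
    have h2 : (π.drop k).filter (fun x => !(A.contains x)) = π.drop k := by
      rw [List.filter_eq_self]
      intro a ha
      simp only [List.elem_eq_mem, Bool.not_eq_true', decide_eq_false_iff_not]
      exact fun hc => hdisj_td hc ha
    rw [h1, h2, List.nil_append]
  have hσf : σ.filter (fun x => !((π.take k).contains x)) = σ := by
    rw [List.filter_eq_self]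
    intro a ha
    simp only [List.elem_eq_mem, Bool.not_eq_true', decide_eq_false_iff_not]
    exact fun hc => hdisj ha ((List.take_sublist k π).subset hc)
  set w := delPrefix α π k with hwdef
  have hwperm : (σ ++ π.drop k).Perm w := by
    have h0 := hperm.filter (fun x => !((π.take k).contains x))
    rw [List.filter_append, hσf, hπf] at h0
    exact h0
  have hlw : w.length = m + (n - k) := by
    rw [← hwperm.length_eq]
    simp [hσl, hπl]
  have hwsubπ : (r :: rest).Sublist w := by
    rw [← hdropπ, ← hπf]
    exact hπsub.filter _
  have hwnd : w.Nodup := (List.filter_sublist (l := α)).nodup hαnd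
  obtain ⟨r₁, r₂, hw12, hrmem, hrest2⟩ := List.cons_sublist_iff.1 hwsubπ
  obtain ⟨s, s₂, hr₁⟩ := List.append_of_mem hrmem
  have hw : w = s ++ r :: (s₂ ++ r₂) := by rw [hw12, hr₁]; simp
  set tl := s₂ ++ r₂ with htl
  have hresttl : rest.Sublist tl := hrest2.trans (List.sublist_append_right s₂ r₂)
  have hwnd' : (s ++ r :: tl).Nodup := hw ▸ hwnd
  have hsnd : s.Nodup := (List.nodup_append.1 hwnd').1
  have hdisj_s : s.Disjoint (r :: tl) := List.disjoint_of_nodup_append hwnd'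
  have hrtlnd : (r :: tl).Nodup := (List.nodup_append.1 hwnd').2.1
  have hrns : r ∉ s := fun hc => hdisj_s hc List.mem_cons_self
  have hrntl : r ∉ tl := (List.nodup_cons.1 hrtlnd).1
  -- the next level filter
  have htakesucc : π.take (k+1) = π.take k ++ [r] := by
    have hlenk : (π.take k).length = k := by
      rw [List.length_take]; omega
    conv_lhs => rw [← List.take_append_drop k π]
    rw [show k + 1 = (π.take k).length + 1 by rw [hlenk], List.take_append, hdropπ]
    rw [List.take_of_length_le (by omega), Nat.add_sub_cancel_left]; rfl
  have hτ : delPrefix α π (k+1) = w.filter (fun x => x != r) := by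
    rw [hwdef]
    unfold delPrefix
    rw [List.filter_filter]
    apply List.filter_congr
    intro x _
    rw [htakesucc]
    by_cases h1 : x ∈ π.take k <;> by_cases h2 : x = r <;> simp [h1, h2]
  have hτval : delPrefix α π (k+1) = s ++ tl := by
    rw [hτ, hw, List.filter_append]
    have h1 : s.filter (fun x => x != r) = s := by
      rw [List.filter_eq_self]
      intro a ha
      simp
      exact fun hc => hrns (hc ▸ ha)
    have h2 : (r :: tl).filter (fun x => x != r) = tl := by
      rw [List.filter_cons_of_neg (by simp)]
      rw [List.filter_eq_self]
      intro a ha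
      simp
      exact fun hc => hrntl (hc ▸ ha)
    rw [h1, h2]
  have hins : (s ++ tl).insertIdx s.length r = s ++ r :: tl := insertIdx_len s tl r
  -- s ⊆ σ hence s.length ≤ m
  have hsσ : s ⊆ σ := by
    intro x hx
    have hxw : x ∈ w := by rw [hw]; exact List.mem_append.2 (Or.inl hx)
    have hxf := List.mem_filter.1 (hwdef ▸ hxw)
    have hxsp : x ∈ σ ++ π := (hperm.mem_iff).2 hxf.1
    rcases List.mem_append.1 hxsp with h | h
    · exact h
    · exfalso
      rcases List.mem_append.1 ((List.take_append_drop k π) ▸ h) with h' | h'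
      · have := hxf.2
        simp [h'] at this
      · rw [hdropπ] at h'
        rcases List.mem_cons.1 h' with h'' | h''
        · exact hrns (h'' ▸ hx)
        · exact hdisj_s hx (List.mem_cons.2 (Or.inr (hresttl.subset h'')))
  have hjm : s.length ≤ m := by
    have := (hsnd.subperm hsσ).length_le
    omega
  -- lengths
  have hlrest : rest.length + (k + 1) = n := by
    have := congrArg List.length hdropπ
    simp [hπl] at this
    omega
  have hltl : w.length = s.length + 1 + tl.length := by
    rw [hw]; simp; omega
  -- maj bounds
  have HM := maj_ins s.length (s ++ tl) r (by simp)
  rw [hins] at HM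
  rw [← hw] at HM
  have hdropw : w.drop s.length = r :: tl := by
    rw [hw]; exact List.drop_left
  rw [hdropw] at HM
  have hsubrt : (r :: rest).Sublist (r :: tl) := hresttl.cons₂ r
  have HL := (sub_des hsubrt).1
  have HC := (sub_cnt hsubrt).1
  simp only [List.length_cons] at HC
  have hdge : dge (k+1) π = desR (r :: rest) := by
    rw [← dge_drop π k, hdropπ]
  -- conclude
  rw [ht (k+1)]
  simp only [Nat.add_sub_cancel]
  rw [← hwdef, hτval, maj_eq_majR, maj_eq_majR, hdge]
  constructor
  · have := HM.1
    omega
  · have := HM.2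
    omega
end

section
/- Let σ be a word with des(σ) = r, π = π₁⋯π_n a word with des(π) = s, σ and π disjoint, and α a shuffle of σ and π with des(α) = k > r. For 0 ≤ i ≤ n let α^{(i)} be the word obtained from α by deleting π₁, …, π_i, and set t(i) = maj(α^{(i−1)}) − maj(α^{(i)}) − d_i(π). If i₁ is the least index in {1,…,n} with des(α^{(i₁−1)}) = des(α^{(i₁)}) + 1, then t(i₁) ≥ k − s. -/
open Polynomial List

lemma descents_cc (c d : ℕ) (t : List ℕ) :
    descents (c :: d :: t) = (if d < c then {1} else ∅) ∪ (descents (d :: t)).image (· + 1) := by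
  ext i
  simp only [descents, Finset.mem_union, Finset.mem_filter, Finset.mem_Ico, Finset.mem_image]
  constructor
  · rintro ⟨⟨h1, h2⟩, h3⟩
    rcases Nat.eq_or_lt_of_le h1 with h | h
    · left
      subst h
      simp at h3
      simp [h3]
    · right
      obtain ⟨a, rfl⟩ : ∃ a, i = a + 1 := ⟨i - 1, by omega⟩
      refine ⟨a, ⟨⟨by omega, by simpa using h2⟩, ?_⟩, rfl⟩
      obtain ⟨b, rfl⟩ : ∃ b, a = b + 1 := ⟨a - 1, by omega⟩
      simpa using h3
  · rintro (h | ⟨a, ⟨⟨ha1, ha2⟩, ha3⟩, rfl⟩)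
    · split_ifs at h with hdc
      · simp only [Finset.mem_singleton] at h
        subst h
        exact ⟨⟨le_refl _, by simp⟩, by simpa using hdc⟩
      · simp at h
    · refine ⟨⟨by omega, by simpa using ha2⟩, ?_⟩
      obtain ⟨b, rfl⟩ : ∃ b, a = b + 1 := ⟨a - 1, by omega⟩
      simpa using ha3

lemma one_notmem_image (l : List ℕ) : 1 ∉ (descents l).image (· + 1) := by
  intro h
  simp only [Finset.mem_image, descents, Finset.mem_filter, Finset.mem_Ico] at h
  obtain ⟨a, ⟨⟨ha, _⟩, _⟩, ha2⟩ := h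
  omega

lemma des_cc (c d : ℕ) (t : List ℕ) :
    des (c :: d :: t) = (if d < c then 1 else 0) + des (d :: t) := by
  rw [des, descents_cc, Finset.card_union_of_disjoint, Finset.card_image_of_injective _ (add_left_injective 1)]
  · split_ifs <;> simp [des, Nat.add_comm]
  · split_ifs
    · simp only [Finset.disjoint_singleton_left]
      exact one_notmem_image _
    · simp

lemma maj_cc (c d : ℕ) (t : List ℕ) :
    maj (c :: d :: t) = (if d < c then 1 else 0) + maj (d :: t) + des (d :: t) := by
  rw [maj, descents_cc, Finset.sum_union, Finset.sum_image (by intro x _ y _ h; exact Nat.add_right_cancel h)]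
  · have : ∑ x ∈ descents (d :: t), (x + 1) = maj (d :: t) + des (d :: t) := by
      rw [Finset.sum_add_distrib]; simp [maj, des]
    rw [this]
    split_ifs <;> simp [Nat.add_assoc]
  · split_ifs
    · simp only [Finset.disjoint_singleton_left]
      exact one_notmem_image _
    · simp

lemma des_nil : des [] = 0 := by simp [des, descents]
lemma des_single (a : ℕ) : des [a] = 0 := by simp [des, descents]
lemma maj_single (a : ℕ) : maj [a] = 0 := by simp [maj, descents]
lemma maj_nil : maj [] = 0 := by simp [maj, descents]

lemma key (a : ℕ) (v : List ℕ) : ∀ (u : List ℕ),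
    des (u ++ v) ≤ des (u ++ a :: v) ∧ des (u ++ a :: v) ≤ des (u ++ v) + 1 ∧
    (des (u ++ a :: v) = des (u ++ v) + 1 →
      (des (u ++ a :: v) : ℤ) ≤ (maj (u ++ a :: v) : ℤ) - maj (u ++ v)) := by
  intro u
  induction u with
  | nil =>
    simp only [List.nil_append]
    cases v with
    | nil => simp [des_single, des_nil, maj_single, maj_nil]
    | cons b v' =>
      rw [des_cc, maj_cc]
      have h1 : (0:ℕ) ≤ maj (b :: v') := Nat.zero_le _
      constructor
      · split_ifs <;> omega
      constructor
      · split_ifs <;> omega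
      · intro h
        push_cast
        split_ifs at h ⊢ <;> omega
  | cons c u' ih =>
    cases u' with
    | nil =>
      cases v with
      | nil =>
        simp only [List.cons_append, List.nil_append]
        rw [des_cc, maj_cc, des_single, maj_single]
        constructor
        · split_ifs <;> simp [des_single]
        constructor
        · split_ifs <;> simp [des_single]
        · intro h
          rw [des_single] at h ⊢
          rw [maj_single]
          push_cast
          split_ifs at h ⊢ <;> omega
      | cons b v'' =>
        simp only [List.cons_append, List.nil_append]
        rw [des_cc c a (b :: v''), des_cc a b v'', des_cc c b v'',
            maj_cc c a (b :: v''), maj_cc a b v'', maj_cc c b v'',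
            des_cc a b v'']
        constructor
        · split_ifs <;> omega
        constructor
        · split_ifs <;> omega
        · intro h
          push_cast
          split_ifs at h ⊢ <;> omega
    | cons e u'' =>
      have e1 : (c :: e :: u'') ++ a :: v = c :: (e :: (u'' ++ a :: v)) := by simp
      have e2 : (c :: e :: u'') ++ v = c :: (e :: (u'' ++ v)) := by simp
      rw [e1, e2, des_cc, des_cc, maj_cc, maj_cc]
      have h3 : e :: (u'' ++ a :: v) = (e :: u'') ++ a :: v := by simp
      have h4 : e :: (u'' ++ v) = (e :: u'') ++ v := by simp
      rw [h3, h4]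
      obtain ⟨ih1, ih2, ih3⟩ := ih
      constructor
      · split_ifs <;> omega
      constructor
      · split_ifs <;> omega
      · intro h
        have hd : des ((e :: u'') ++ a :: v) = des ((e :: u'') ++ v) + 1 := by
          split_ifs at h <;> omega
        have := ih3 hd
        push_cast at this ⊢
        split_ifs at h ⊢ <;> omega

/-- If `i₁` is the least index at which deleting `π_{i₁}` drops the descent number,
then `t(i₁) ≥ k - s`. -/
theorem t_first_drop_ge (m n r s k : ℕ) (σ π α : List ℕ)
    (hσl : σ.length = m) (hπl : π.length = n) (hσnd : σ.Nodup) (hπnd : π.Nodup)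
    (hdisj : σ.Disjoint π) (hr : des σ = r) (hs : des π = s)
    (hα : IsShuffle σ π α) (hk : des α = k) (hkr : r < k)
    (t : ℕ → ℤ)
    (ht : ∀ i, t i = (maj (delPrefix α π (i - 1)) : ℤ) - (maj (delPrefix α π i) : ℤ)
      - (dge i π : ℤ))
    (i₁ : ℕ) (hi1 : 1 ≤ i₁) (hi1n : i₁ ≤ n)
    (hdrop : des (delPrefix α π (i₁ - 1)) = des (delPrefix α π i₁) + 1)
    (hleast : ∀ j, 1 ≤ j → j < i₁ →
      des (delPrefix α π (j - 1)) ≠ des (delPrefix α π j) + 1) :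
    (k : ℤ) - s ≤ t i₁ := by
  obtain ⟨hlen, hσα, hπα⟩ := hα
  -- α is a permutation of σ ++ π, hence Nodup
  have hsub : σ ++ π <+~ α := by
    rw [List.subperm_ext_iff]
    intro x hx
    rw [List.count_append]
    rcases List.mem_append.mp hx with hxσ | hxπ
    · have h1 : List.count x π = 0 := List.count_eq_zero.mpr (hdisj hxσ)
      have h2 := hσα.count_le x
      omega
    · have h1 : List.count x σ = 0 := List.count_eq_zero.mpr (fun h => hdisj h hxπ)
      have h2 := hπα.count_le x
      omega
  have hperm : σ ++ π ~ α := hsub.perm_of_length_le (by simp [hlen])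
  have hαnd : α.Nodup := hperm.nodup_iff.mp
    (List.nodup_append'.mpr ⟨hσnd, hπnd, hdisj⟩)
  -- the single-deletion step
  have hgen : ∀ j, 1 ≤ j → j ≤ n → ∃ b u v,
      delPrefix α π (j - 1) = u ++ b :: v ∧ delPrefix α π j = u ++ v := by
    intro j hj1 hjn
    have hjl : j - 1 < π.length := by omega
    set b := π[j-1] with hb
    have hbπ : b ∈ π := List.getElem_mem hjl
    have hbα : b ∈ α := hπα.subset hbπ
    have hdropeq : π.drop (j-1) = b :: π.drop j := by
      rw [List.drop_eq_getElem_cons hjl, show j - 1 + 1 = j by omega]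
    have hbtake : b ∉ π.take (j-1) := by
      have hnd2 : (π.take (j-1) ++ π.drop (j-1)).Nodup := by
        rw [List.take_append_drop]; exact hπnd
      have hd := (List.nodup_append'.mp hnd2).2.2
      intro hmem
      exact hd hmem (by rw [hdropeq]; exact List.mem_cons_self)
    have hbD : b ∈ delPrefix α π (j-1) := by
      simp only [delPrefix, List.mem_filter, Bool.not_eq_true']
      exact ⟨hbα, by simpa using hbtake⟩
    obtain ⟨u, v, hU⟩ := List.append_of_mem hbD
    have hDnd : (delPrefix α π (j-1)).Nodup := hαnd.filter _
    rw [hU] at hDnd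
    have hbu : b ∉ u ∧ b ∉ v := by
      have := List.nodup_middle.mp hDnd
      rw [List.nodup_cons, List.mem_append] at this
      tauto
    have htake : π.take j = π.take (j-1) ++ [b] := by
      have : j = (j - 1) + 1 := by omega
      rw [this, List.take_succ]
      congr 1
      simp [List.getElem?_eq_getElem hjl, hb]
    have hDj : delPrefix α π j = (delPrefix α π (j-1)).filter (fun x => !(x == b)) := by
      simp only [delPrefix, List.filter_filter]
      apply List.filter_congr
      intro x hx
      rw [htake]
      simp only [List.contains_eq_any_beq, List.any_append, List.any_cons, List.any_nil,
        Bool.or_false, Bool.not_or]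
      exact Bool.and_comm _ _
    refine ⟨b, u, v, hU, ?_⟩
    rw [hDj, hU, List.filter_append, List.filter_cons]
    have hfu : u.filter (fun x => !(x == b)) = u :=
      List.filter_eq_self.mpr (fun x hx => by
        simp only [Bool.not_eq_true', beq_eq_false_iff_ne]
        exact fun h => hbu.1 (h ▸ hx))
    have hfv : v.filter (fun x => !(x == b)) = v :=
      List.filter_eq_self.mpr (fun x hx => by
        simp only [Bool.not_eq_true', beq_eq_false_iff_ne]
        exact fun h => hbu.2 (h ▸ hx))
    simp [hfu, hfv]
  have h0 : delPrefix α π 0 = α := by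
    simp [delPrefix]
  -- descents stay equal to k up to i₁ - 1
  have hdes : ∀ j, j ≤ i₁ - 1 → des (delPrefix α π j) = k := by
    intro j
    induction j with
    | zero => intro _; rw [h0, hk]
    | succ j ihj =>
      intro hj
      have hkj := ihj (by omega)
      obtain ⟨b, u, v, hU, hV⟩ := hgen (j+1) (by omega) (by omega)
      simp only [Nat.add_sub_cancel] at hU
      obtain ⟨k1, k2, -⟩ := key b v u
      have hne := hleast (j+1) (by omega) (by omega)
      simp only [Nat.add_sub_cancel] at hne
      rw [hU] at hkj
      rw [hU, hV] at hne
      rw [hV]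
      omega
  have hkfin : des (delPrefix α π (i₁ - 1)) = k := hdes (i₁ - 1) le_rfl
  obtain ⟨b, u, v, hU, hV⟩ := hgen i₁ hi1 hi1n
  have hkey := key b v u
  rw [hU, hV] at hdrop
  rw [hU] at hkfin
  have hmaj : (des (u ++ b :: v) : ℤ) ≤ (maj (u ++ b :: v) : ℤ) - maj (u ++ v) :=
    hkey.2.2 hdrop
  have hdge : dge i₁ π ≤ s := by
    rw [← hs]
    exact Finset.card_filter_le _ _
  rw [ht i₁]
  rw [hU]
  rw [hV]
  rw [hkfin] at hmaj
  have : (dge i₁ π : ℤ) ≤ s := by exact_mod_cast hdge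
  linarith
end

section
/- Let σ = σ₁⋯σ_m be a word of length m, p a natural number not occurring in σ, and 1 ≤ i ≤ m. Let σ[i] = σ₁⋯σ_i be the prefix of σ of length i. Then im(σ[i], j, p) + d_i(σ) = im(σ, j, p) for all 0 ≤ j < i, and moreover im(σ[i], i, p) = i if σ_i > p and im(σ[i], i, p) = 0 if σ_i < p. -/
open Polynomial List

lemma getD_take' (σ : List ℕ) (i k : ℕ) (hk : k < i) (hi : i ≤ σ.length) :
    (σ.take i).getD k 0 = σ.getD k 0 := by
  have hk' : k < σ.length := lt_of_lt_of_le hk hi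
  rw [List.getD_eq_getElem _ _ (by rw [length_take]; omega),
      List.getD_eq_getElem _ _ hk']
  simp [List.getElem_take]

lemma getD_ins (σ : List ℕ) (j p k : ℕ) (hj : j ≤ σ.length) :
    (σ.insertIdx j p).getD k 0 =
      if k < j then σ.getD k 0 else if k = j then p else σ.getD (k - 1) 0 := by
  have hlen : (σ.insertIdx j p).length = σ.length + 1 := length_insertIdx_of_le_length hj p
  rcases lt_trichotomy k j with h | h | h
  · rw [if_pos h]
    have hk : k < σ.length := by omega
    rw [getD_eq_getElem _ _ (by omega), getD_eq_getElem _ _ hk]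
    exact getElem_insertIdx_of_lt h _
  · subst h
    rw [if_neg (by omega), if_pos rfl, getD_eq_getElem _ _ (by omega)]
    exact getElem_insertIdx_self _
  · rw [if_neg (by omega), if_neg (by omega)]
    by_cases hk : k - 1 < σ.length
    · rw [getD_eq_getElem _ _ (by omega), getD_eq_getElem _ _ hk]
      have := getElem_insertIdx_add_succ σ p j (k - 1 - j) (by omega) (by omega)
      convert this using 2 <;> omega
    · rw [getD_eq_default _ _ (by omega), getD_eq_default _ _ (by omega)]

lemma descents_take (σ : List ℕ) (i : ℕ) (hi : i ≤ σ.length) :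
    descents (σ.take i) = (descents σ).filter (fun t => t < i) := by
  ext t
  simp only [descents, Finset.mem_filter, Finset.mem_Ico, length_take, min_eq_left hi]
  by_cases ht : 1 ≤ t ∧ t < i
  · rw [getD_take' _ _ _ ht.2 hi, getD_take' _ _ _ (by omega) hi]
    constructor
    · rintro ⟨_, h⟩; exact ⟨⟨⟨ht.1, lt_of_lt_of_le ht.2 hi⟩, h⟩, ht.2⟩
    · rintro ⟨⟨_, h⟩, _⟩; exact ⟨⟨ht.1, ht.2⟩, h⟩
  · constructor
    · rintro ⟨h, _⟩; omega
    · rintro ⟨⟨⟨h1, _⟩, _⟩, h2⟩; omega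

lemma maj_split (σ : List ℕ) (i : ℕ) (hi : i ≤ σ.length) :
    maj σ = maj (σ.take i) + ∑ t ∈ (descents σ).filter (fun t => i ≤ t), t := by
  rw [maj, maj, descents_take σ i hi,
    ← Finset.sum_filter_add_sum_filter_not (descents σ) (fun t => t < i)]
  congr 2
  apply Finset.filter_congr
  intro t _
  simp

lemma take_insertIdx' (p : ℕ) : ∀ (j i : ℕ) (σ : List ℕ), j ≤ i →
    (σ.insertIdx j p).take (i+1) = (σ.take i).insertIdx j p
  | 0, i, σ, _ => by simp [insertIdx_zero]
  | (j+1), i, [], _ => by simp [insertIdx_succ_nil]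
  | (j+1), i, a :: s, h => by
    obtain ⟨i', rfl⟩ : ∃ i', i = i' + 1 := ⟨i - 1, by omega⟩
    simp only [insertIdx_succ_cons, take_succ_cons]
    rw [take_insertIdx' p j i' s (by omega)]

lemma filter_descents_ins (σ : List ℕ) (p j i : ℕ) (hj : j < i) (hi : i ≤ σ.length) :
    (descents (σ.insertIdx j p)).filter (fun t => i + 1 ≤ t) =
      ((descents σ).filter (fun t => i ≤ t)).image (fun t => t + 1) := by
  have hjle : j ≤ σ.length := by omega
  ext t
  simp only [descents, Finset.mem_image, Finset.mem_filter, Finset.mem_Ico,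
    length_insertIdx_of_le_length hjle p]
  constructor
  · rintro ⟨⟨⟨h1, h2⟩, h3⟩, h4⟩
    rw [getD_ins σ j p t hjle, getD_ins σ j p (t-1) hjle,
      if_neg (by omega : ¬ t < j), if_neg (by omega : ¬ t = j),
      if_neg (by omega : ¬ t - 1 < j), if_neg (by omega : ¬ t - 1 = j)] at h3
    exact ⟨t - 1, ⟨⟨⟨by omega, by omega⟩, h3⟩, by omega⟩, by omega⟩
  · rintro ⟨s, ⟨⟨⟨h1, h2⟩, h3⟩, h4⟩, rfl⟩
    refine ⟨⟨⟨by omega, by omega⟩, ?_⟩, by omega⟩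
    simp only [Nat.add_sub_cancel]
    rw [getD_ins σ j p (s+1) hjle, getD_ins σ j p s hjle,
      if_neg (by omega : ¬ s + 1 < j), if_neg (by omega : ¬ s + 1 = j),
      if_neg (by omega : ¬ s < j), if_neg (by omega : ¬ s = j)]
    simpa using h3

/-- Major increments of insertions into a prefix `σ[i] = σ₁⋯σ_i`:
`im(σ[i], j, p) + d_i(σ) = im(σ, j, p)` for `0 ≤ j < i`, and
`im(σ[i], i, p)` is `i` or `0` according to whether `σ_i > p` or `σ_i < p`. -/
theorem im_prefix (m : ℕ) (σ : List ℕ) (hσl : σ.length = m) (hσnd : σ.Nodup)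
    (p : ℕ) (hp : p ∉ σ) (i : ℕ) (hi1 : 1 ≤ i) (him : i ≤ m) :
    (∀ j, j < i → im (σ.take i) j p + (dge i σ : ℤ) = im σ j p) ∧
    (p < σ.getD (i - 1) 0 → im (σ.take i) i p = (i : ℤ)) ∧
    (σ.getD (i - 1) 0 < p → im (σ.take i) i p = 0) := by
  subst hσl
  have hi : i ≤ σ.length := him
  have hlen : (σ.take i).length = i := by rw [length_take]; omega
  -- Part 1
  have part1 : ∀ j, j < i → im (σ.take i) j p + (dge i σ : ℤ) = im σ j p := by
    intro j hj
    have hjle : j ≤ σ.length := by omega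
    have hkey : maj (σ.insertIdx j p) =
        maj ((σ.take i).insertIdx j p)
          + (∑ t ∈ (descents σ).filter (fun t => i ≤ t), t) + dge i σ := by
      have h2 := maj_split (σ.insertIdx j p) (i+1)
        (by rw [length_insertIdx_of_le_length hjle p]; omega)
      rw [take_insertIdx' p j i σ (by omega), filter_descents_ins σ p j i hj hi,
        Finset.sum_image (by intros a _ b _ hab; simp only at hab; omega)] at h2
      rw [h2, Finset.sum_add_distrib, dge]
      simp [add_assoc]
    have hkey2 := maj_split σ i hi
    simp only [im, ins]
    omega
  refine ⟨part1, ?_, ?_⟩ <;> intro hcmp <;>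
  · have hins : (σ.take i).insertIdx i p = σ.take i ++ [p] := by
      have h := @insertIdx_length_self _ (σ.take i) p
      rwa [hlen] at h
    have hgd : (σ.take i ++ [p]).getD i 0 = p := by
      rw [getD_eq_getElem _ _ (by simp [hlen])]
      simp [List.getElem_append_right, hlen]
    have hgd2 : (σ.take i ++ [p]).getD (i-1) 0 = σ.getD (i-1) 0 := by
      rw [getD_eq_getElem _ _ (by simp [hlen]),
        List.getElem_append_left (by omega), ← getD_eq_getElem _ 0 (by omega),
        getD_take' σ i (i-1) (by omega) hi]
    have hgdlt : ∀ t, t < i → (σ.take i ++ [p]).getD t 0 = (σ.take i).getD t 0 := by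
      intro t ht
      rw [getD_eq_getElem _ _ (by simp [hlen]; omega),
        List.getElem_append_left (by omega), ← getD_eq_getElem _ 0 (by omega)]
    have hdlt : ∀ t ∈ descents (σ.take i), t < i := by
      intro t ht
      simp only [descents, Finset.mem_filter, Finset.mem_Ico, hlen] at ht
      exact ht.1.2
    have hd : descents (σ.take i ++ [p]) =
        if p < σ.getD (i-1) 0 then insert i (descents (σ.take i))
        else descents (σ.take i) := by
      have hL : (σ.take i ++ [p]).length = i + 1 := by simp [hlen]
      have e1 : Finset.Ico 1 (i+1) = insert i (Finset.Ico 1 i) := by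
        rw [Finset.Ico_add_one_right_eq_Icc, ← Finset.Ico_insert_right (by omega : 1 ≤ i)]
      unfold descents
      rw [hL, hlen, e1, Finset.filter_insert]
      have e2 : (Finset.Ico 1 i).filter
            (fun t => (σ.take i ++ [p]).getD t 0 < (σ.take i ++ [p]).getD (t-1) 0)
          = (Finset.Ico 1 i).filter
            (fun t => (σ.take i).getD t 0 < (σ.take i).getD (t-1) 0) := by
        apply Finset.filter_congr
        intro t ht
        simp only [Finset.mem_Ico] at ht
        rw [hgdlt t ht.2, hgdlt (t-1) (by omega)]
      simp only [e2, hgd, hgd2]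
    have hnotmem : i ∉ descents (σ.take i) := fun h => absurd (hdlt i h) (by omega)
    simp only [im, ins, hins, maj, hd]
    · first
      | (rw [if_pos hcmp, Finset.sum_insert hnotmem]; push_cast; ring)
      | (rw [if_neg (by omega)]; ring)
end
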